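/- Let t ≥ 3, d ≥ 1, and k be integers with 2d ≤ k and k ≥ t−1. Then C(d, t−1) < (d / C(t,2)) · C(k−1, t−2). -/

import Mathlib

lemma aux_desc (n m : ℕ) : 2 ^ m * n.descFactorial m ≤ (2 * n + 1).descFactorial m := by
  induction m with
  | zero => simp
  | succ m ih =>
    rw [Nat.descFactorial_succ, Nat.descFactorial_succ, pow_succ]
    calc 2 ^ m * 2 * ((n - m) * n.descFactorial m)
        = (2 * (n - m)) * (2 ^ m * n.descFactorial m) := by ring
      _ ≤ (2 * n + 1 - m) * (2 * n + 1).descFactorial m :=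
          Nat.mul_le_mul (by omega) ih

lemma aux_choose (n m : ℕ) : 2 ^ m * n.choose m ≤ (2 * n + 1).choose m := by
  have h := aux_desc n m
  rw [Nat.descFactorial_eq_factorial_mul_choose, Nat.descFactorial_eq_factorial_mul_choose] at h
  have hf : 0 < m.factorial := Nat.factorial_pos m
  have h' : m.factorial * (2 ^ m * n.choose m) ≤ m.factorial * ((2 * n + 1).choose m) := by
    calc m.factorial * (2 ^ m * n.choose m)
        = 2 ^ m * (m.factorial * n.choose m) := by ring
      _ ≤ _ := h
  exact Nat.le_of_mul_le_mul_left h' hf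

theorem stmt_14 (t d k : ℕ) (ht : 3 ≤ t) (hd : 1 ≤ d) (hk : 2 * d ≤ k) (hkt : t - 1 ≤ k) :
    (d.choose (t - 1) : ℚ) < ((d : ℚ) / (t.choose 2)) * ((k - 1).choose (t - 2) : ℚ) := by
  obtain ⟨m, rfl⟩ : ∃ m, t = m + 3 := ⟨t - 3, by omega⟩
  set M := m + 1 with hM
  -- key nat inequality: C(d,M+1) * (2*C(m+3,2)) < 2 * (d * C(k-1,M))
  have key : d.choose (M + 1) * (2 * (m + 3).choose 2) < 2 * (d * (k - 1).choose M) := by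
    have h2c : 2 * (m + 3).choose 2 = (m + 3) * (m + 2) := by
      have := Nat.add_one_mul_choose_eq (m + 2) 1
      simp [Nat.choose_one_right, Nat.succ_eq_add_one] at this
      have e : m + 2 + 1 = m + 3 := by omega
      rw [e] at this
      omega
    have hid : d * (d - 1).choose M = d.choose (M + 1) * (M + 1) := by
      have := Nat.add_one_mul_choose_eq (d - 1) M
      simpa [Nat.succ_eq_add_one, Nat.sub_add_cancel hd] using this
    rw [h2c]
    have hrw : d.choose (M + 1) * ((m + 3) * (m + 2)) = d * (d - 1).choose M * (m + 3) := by
      rw [hid]; have hMe : M + 1 = m + 2 := by omega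
      rw [hMe]; ring
    rw [hrw]
    rcases lt_or_ge (d - 1) M with hcase | hcase
    · rw [Nat.choose_eq_zero_of_lt hcase]
      have h1 : 0 < (k - 1).choose M := Nat.choose_pos (by omega)
      have h2 : 0 < d * (k - 1).choose M := Nat.mul_pos hd h1
      simp only [Nat.mul_zero, Nat.zero_mul]
      omega
    · have h1 : 2 ^ M * (d - 1).choose M ≤ (2 * (d - 1) + 1).choose M :=
        aux_choose (d - 1) M
      have h2 : (2 * (d - 1) + 1).choose M ≤ (k - 1).choose M :=
        Nat.choose_le_choose M (by omega)
      have hpos : 1 ≤ (d - 1).choose M := Nat.choose_pos hcase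
      have hpow : m + 3 < 2 * 2 ^ M := by
        have h2p : m < 2 ^ m := Nat.lt_two_pow_self
        have h2m : 2 ^ M = 2 * 2 ^ m := by rw [hM, pow_succ]; omega
        omega
      have inner : (d - 1).choose M * (m + 3) < (d - 1).choose M * (2 * 2 ^ M) := by
        nlinarith
      have hcomb : (d - 1).choose M * 2 ^ M ≤ (k - 1).choose M :=
        le_trans (by rw [Nat.mul_comm]; exact h1) h2
      calc d * (d - 1).choose M * (m + 3)
          = d * ((d - 1).choose M * (m + 3)) := by ring
        _ < d * ((d - 1).choose M * (2 * 2 ^ M)) := mul_lt_mul_of_pos_left inner hd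
        _ = 2 * (d * ((d - 1).choose M * 2 ^ M)) := by ring
        _ ≤ 2 * (d * (k - 1).choose M) :=
            Nat.mul_le_mul_left 2 (Nat.mul_le_mul_left d hcomb)
  have hT1 : m + 3 - 1 = M + 1 := by omega
  have hT2 : m + 3 - 2 = M := by omega
  rw [hT1, hT2]
  have hcpos : (0 : ℚ) < ((m + 3).choose 2 : ℚ) := by
    exact_mod_cast Nat.choose_pos (by omega)
  rw [div_mul_eq_mul_div, lt_div_iff₀ hcpos]
  have hq : (d.choose (M + 1) * (2 * (m + 3).choose 2) : ℚ) < (2 * (d * (k - 1).choose M) : ℚ) := by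
    exact_mod_cast key
  push_cast at hq ⊢
  nlinarith [hq]
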